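/- In the Euclidean plane, let M and L be lines, let p ∈ M with p ∉ L, and let a, f ∈ L with a ≠ f. Suppose the vector a −ᵥ p is orthogonal to the direction of M (the segment from p to a is perpendicular to M at p) and the vector p −ᵥ f is orthogonal to the direction of L (f is the foot of the perpendicular from p to L). Then there exists a point e ∈ M with f strictly between e and a (Sbtw ℝ e f a); in particular M meets L. -/

import Mathlib

open scoped RealInnerProductSpace

/-- If `pa ⊥ M` at `p` and `f` is the foot of the perpendicular from `p` to `L`,
with `a, f ∈ L` distinct and `p ∉ L`, then `M` meets `L` in a point `e` with
`f` strictly between `e` and `a`. -/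
theorem perp_foot_meets
    (M L : AffineSubspace ℝ (EuclideanSpace ℝ (Fin 2)))
    (hM : Module.finrank ℝ M.direction = 1)
    (hL : Module.finrank ℝ L.direction = 1)
    (p : EuclideanSpace ℝ (Fin 2)) (hpM : p ∈ M) (hpL : p ∉ L)
    (a f : EuclideanSpace ℝ (Fin 2)) (haL : a ∈ L) (hfL : f ∈ L) (haf : a ≠ f)
    (hperpM : ∀ w ∈ M.direction, ⟪a -ᵥ p, w⟫ = 0)
    (hperpL : ∀ w ∈ L.direction, ⟪p -ᵥ f, w⟫ = 0) :
    ∃ e ∈ M, Sbtw ℝ e f a := by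
  set u := a -ᵥ f with hu_def
  set v := p -ᵥ f with hv_def
  have hpf : p ≠ f := fun h => hpL (h ▸ hfL)
  have hv : v ≠ 0 := by rw [hv_def, Ne, vsub_eq_zero_iff_eq]; exact hpf
  have hu : u ≠ 0 := by rw [hu_def, Ne, vsub_eq_zero_iff_eq]; exact haf
  have hap : a ≠ p := fun h => hpL (h ▸ haL)
  have hapv : a -ᵥ p ≠ 0 := by rw [Ne, vsub_eq_zero_iff_eq]; exact hap
  have huv : ⟪v, u⟫ = 0 := hperpL u (AffineSubspace.vsub_mem_direction haL hfL)
  set c : ℝ := ‖v‖ ^ 2 / ‖u‖ ^ 2 with hc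
  have hu2 : (0:ℝ) < ‖u‖ ^ 2 := pow_pos (norm_pos_iff.mpr hu) 2
  have hc0 : 0 < c := div_pos (pow_pos (norm_pos_iff.mpr hv) 2) hu2
  set e := ((-c) • u) +ᵥ f with he
  have hMd : M.direction = (ℝ ∙ (a -ᵥ p))ᗮ := by
    have hle : M.direction ≤ (ℝ ∙ (a -ᵥ p))ᗮ := by
      intro w hw
      rw [Submodule.mem_orthogonal_singleton_iff_inner_right]
      exact hperpM w hw
    refine Submodule.eq_of_le_of_finrank_le hle ?_
    have h1 : Module.finrank ℝ (ℝ ∙ (a -ᵥ p)) = 1 := finrank_span_singleton hapv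
    have h2 := Submodule.finrank_add_finrank_orthogonal (K := ℝ ∙ (a -ᵥ p))
    have h3 : Module.finrank ℝ (EuclideanSpace ℝ (Fin 2)) = 2 :=
      finrank_euclideanSpace_fin
    rw [h1, h3] at h2
    omega
  have hep : e -ᵥ p = (-c) • u - v := by
    rw [he, vadd_vsub_assoc, hv_def]
    simp only [vsub_eq_sub]
    module
  have hapuv : a -ᵥ p = u - v := by
    rw [hu_def, hv_def]; simp only [vsub_eq_sub]; module
  have heM : e ∈ M := by
    have hmem : e -ᵥ p ∈ M.direction := by
      rw [hMd, Submodule.mem_orthogonal_singleton_iff_inner_right, hep, hapuv]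
      rw [inner_sub_left, inner_sub_right, inner_sub_right, inner_smul_right,
        inner_smul_right, real_inner_self_eq_norm_sq, real_inner_self_eq_norm_sq,
        real_inner_comm v u] at *
      rw [huv]
      field_simp [hc]
      have hcu : c * ‖u‖ ^ 2 = ‖v‖ ^ 2 := by rw [hc]; exact div_mul_cancel₀ _ hu2.ne'
      linear_combination -hcu
    have := AffineSubspace.vadd_mem_of_mem_direction hmem hpM
    simpa using this
  refine ⟨e, heM, ?_⟩
  have hae : a -ᵥ e = (1 + c) • u := by
    rw [he, vsub_vadd_eq_vsub_sub, ← hu_def]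
    module
  have hfe : f -ᵥ e = c • u := by
    rw [he, vsub_vadd_eq_vsub_sub, vsub_self]
    module
  have h1c : (0:ℝ) < 1 + c := by linarith
  have hfline : f = AffineMap.lineMap e a (c / (1 + c)) := by
    rw [AffineMap.lineMap_apply]
    rw [hae, smul_smul, div_mul_cancel₀ _ h1c.ne', ← hfe, vsub_vadd]
  rw [hfline]
  refine sbtw_lineMap_iff.mpr ⟨?_, ?_, ?_⟩
  · intro h
    apply hu
    have : a -ᵥ e = 0 := by rw [h, vsub_self]
    rw [hae] at this
    exact (smul_eq_zero.mp this).resolve_left (by linarith) |>.symm ▸ rfl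
  · positivity
  · rw [div_lt_one h1c]; linarith
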